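/- Let L ∈ ℝ^{n×n} be the Laplacian of a connected undirected weighted graph and let D ⊊ {1,…,n} be a nonempty proper subset of the nodes with complement C satisfying |C| ≥ 2. Partition L accordingly as L = [[L_CC, L_CD],[L_DC, L_DD]]. Then L_DD is invertible and the Schur complement L_CC − L_CD·L_DD⁻¹·L_DC is symmetric, positive semidefinite, has strictly positive diagonal entries, nonpositive off-diagonal entries, and zero row and column sums. -/

import Mathlib

open Finset

open Matrix in
private def finsetComplEquiv {α : Type*} [Fintype α] [DecidableEq α] (D : Finset α) :
    {i // i ∈ Dᶜ} ⊕ {i // i ∈ D} ≃ α where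
  toFun := Sum.elim Subtype.val Subtype.val
  invFun i := if h : i ∈ D then Sum.inr ⟨i, h⟩ else Sum.inl ⟨i, Finset.mem_compl.mpr h⟩
  left_inv := by
    rintro (⟨i, hi⟩ | ⟨i, hi⟩)
    · simp [Finset.mem_compl.mp hi]
    · simp [hi]
  right_inv := fun i => by by_cases h : i ∈ D <;> simp [h]

open Matrix in
/-- **Schur complements of a connected graph Laplacian.**
Let `L = Δ - A` be the Laplacian of a connected undirected weighted graph on `n` nodes,
let `D` be a nonempty proper subset of the nodes whose complement `C = Dᶜ` has at least two
elements, and partition `L` into the blocks `L_CC, L_CD, L_DC, L_DD`.  Then `L_DD` is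
invertible, and the Schur complement `M = L_CC - L_CD L_DD⁻¹ L_DC` is symmetric, positive
semidefinite, has strictly positive diagonal entries, nonpositive off-diagonal entries, and
zero row and column sums. -/
theorem schur_complement_of_connected_laplacian
    {n : ℕ} (a : Fin n → Fin n → ℝ)
    (hsym : ∀ i j, a i j = a j i)
    (hnonneg : ∀ i j, 0 ≤ a i j)
    (hdiag : ∀ i, a i i = 0)
    (hconn : (SimpleGraph.fromRel fun i j => 0 < a i j).Connected)
    (D : Finset (Fin n)) (hDne : D.Nonempty) (hDproper : D ≠ Finset.univ)
    (hC : 2 ≤ Dᶜ.card) :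
    let L : Matrix (Fin n) (Fin n) ℝ := fun i j => (if i = j then ∑ l, a i l else 0) - a i j
    let LDD : Matrix {i // i ∈ D} {i // i ∈ D} ℝ := fun i j => L i.1 j.1
    let LCC : Matrix {i // i ∈ Dᶜ} {i // i ∈ Dᶜ} ℝ := fun i j => L i.1 j.1
    let LCD : Matrix {i // i ∈ Dᶜ} {i // i ∈ D} ℝ := fun i j => L i.1 j.1
    let LDC : Matrix {i // i ∈ D} {i // i ∈ Dᶜ} ℝ := fun i j => L i.1 j.1
    let M : Matrix {i // i ∈ Dᶜ} {i // i ∈ Dᶜ} ℝ := LCC - LCD * LDD⁻¹ * LDC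
    IsUnit LDD ∧
    M.IsSymm ∧
    M.PosSemidef ∧
    (∀ i, 0 < M i i) ∧
    (∀ i j, i ≠ j → M i j ≤ 0) ∧
    (∀ i, ∑ j, M i j = 0) ∧
    (∀ j, ∑ i, M i j = 0) := by
  intro L LDD LCC LCD LDC M
  classical
  -- basic symmetry and row-sum facts for L
  have hLsym : ∀ i j, L i j = L j i := by
    intro i j
    simp only [L]
    by_cases h : i = j
    · subst h; rfl
    · rw [if_neg h, if_neg (Ne.symm h), hsym]
  have hLoff : ∀ i j, i ≠ j → L i j = - a i j := by
    intro i j h; simp only [L, if_neg h]; ring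
  have hLoff_nonpos : ∀ i j, i ≠ j → L i j ≤ 0 := by
    intro i j h; rw [hLoff i j h]; linarith [hnonneg i j]
  have hrow : ∀ i, ∑ j, L i j = 0 := by
    intro i
    simp only [L]
    rw [Finset.sum_sub_distrib]
    simp
  -- the quadratic form of L
  have hquad : ∀ x : Fin n → ℝ,
      x ⬝ᵥ L *ᵥ x = (1/2) * ∑ i, ∑ j, a i j * (x i - x j)^2 := by
    intro x
    have expand : x ⬝ᵥ L *ᵥ x
        = (∑ i, ∑ j, a i j * x i ^ 2) - ∑ i, ∑ j, a i j * (x i * x j) := by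
      rw [← Finset.sum_sub_distrib]
      refine Finset.sum_congr rfl fun i _ => ?_
      simp only [Matrix.mulVec, dotProduct, L]
      rw [Finset.mul_sum]
      calc ∑ j, x i * (((if i = j then ∑ l, a i l else 0) - a i j) * x j)
          = (∑ j, x i * ((if i = j then (∑ l, a i l : ℝ) else 0) * x j))
              - ∑ j, x i * (a i j * x j) := by
            rw [← Finset.sum_sub_distrib]
            exact Finset.sum_congr rfl fun j _ => by ring
        _ = (∑ j, a i j * x i ^ 2) - ∑ j, a i j * (x i * x j) := by
            congr 1
            · simp only [ite_mul, zero_mul, mul_ite, mul_zero, Finset.sum_ite_eq,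
                Finset.mem_univ, if_true]
              rw [← Finset.sum_mul]
              ring
            · exact Finset.sum_congr rfl fun j _ => by ring
        _ = _ := rfl
    have swap2 : ∑ i, ∑ j, a i j * x j ^ 2 = ∑ i, ∑ j, a i j * x i ^ 2 := by
      rw [Finset.sum_comm]
      exact Finset.sum_congr rfl fun i _ => Finset.sum_congr rfl fun j _ => by rw [hsym]
    have rhs : ∑ i, ∑ j, a i j * (x i - x j)^2
        = (∑ i, ∑ j, a i j * x i ^ 2) + (∑ i, ∑ j, a i j * x j ^ 2)
            - 2 * ∑ i, ∑ j, a i j * (x i * x j) := by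
      rw [Finset.mul_sum, ← Finset.sum_add_distrib, ← Finset.sum_sub_distrib]
      refine Finset.sum_congr rfl fun i _ => ?_
      rw [Finset.mul_sum, ← Finset.sum_add_distrib, ← Finset.sum_sub_distrib]
      exact Finset.sum_congr rfl fun j _ => by ring
    rw [expand, rhs, swap2]
    ring
  have hform_nonneg : ∀ x : Fin n → ℝ, 0 ≤ x ⬝ᵥ L *ᵥ x := by
    intro x
    rw [hquad]
    have : (0:ℝ) ≤ ∑ i, ∑ j, a i j * (x i - x j)^2 :=
      Finset.sum_nonneg fun i _ => Finset.sum_nonneg fun j _ =>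
        mul_nonneg (hnonneg i j) (sq_nonneg _)
    linarith
  -- vectors with vanishing quadratic form are constant
  have hconst : ∀ x : Fin n → ℝ, x ⬝ᵥ L *ᵥ x = 0 → ∀ i j, x i = x j := by
    intro x hx
    have hterm : ∀ i j, 0 < a i j → x i = x j := by
      intro i j hij
      rw [hquad] at hx
      have h0 : ∑ i, ∑ j, a i j * (x i - x j)^2 = 0 := by linarith
      have h1 := (Finset.sum_eq_zero_iff_of_nonneg (fun i _ =>
        Finset.sum_nonneg fun j _ => mul_nonneg (hnonneg i j) (sq_nonneg _))).mp h0 i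
        (Finset.mem_univ i)
      have h2 := (Finset.sum_eq_zero_iff_of_nonneg (fun j _ =>
        mul_nonneg (hnonneg i j) (sq_nonneg _))).mp h1 j (Finset.mem_univ j)
      have h3 : (x i - x j)^2 = 0 := by
        rcases mul_eq_zero.mp h2 with h | h
        · exact absurd h (ne_of_gt hij)
        · exact h
      have := pow_eq_zero_iff (n := 2) (by norm_num) |>.mp h3
      linarith
    intro i j
    obtain ⟨w⟩ := hconn.preconnected i j
    induction w with
    | nil => rfl
    | cons h p ih =>
      obtain ⟨hne, h1 | h1⟩ := (SimpleGraph.fromRel_adj _ _ _).mp h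
      · exact (hterm _ _ h1).trans ih
      · exact ((hterm _ _ h1).symm).trans ih
  -- the block decomposition
  set e : {i // i ∈ Dᶜ} ⊕ {i // i ∈ D} ≃ Fin n := finsetComplEquiv D with he
  have hblock : Matrix.fromBlocks LCC LCD LDC LDD = L.submatrix e e := by
    ext (i | i) (j | j) <;> rfl
  have hdot_equiv : ∀ (f g : Fin n → ℝ), (f ∘ e) ⬝ᵥ (g ∘ e) = f ⬝ᵥ g := by
    intro f g
    exact Fintype.sum_equiv e _ _ fun i => rfl
  have hform_transfer : ∀ w : ({i // i ∈ Dᶜ} ⊕ {i // i ∈ D}) → ℝ,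
      w ⬝ᵥ (Matrix.fromBlocks LCC LCD LDC LDD) *ᵥ w
        = (w ∘ e.symm) ⬝ᵥ L *ᵥ (w ∘ e.symm) := by
    intro w
    rw [hblock, Matrix.submatrix_mulVec_equiv]
    have hw : ((w ∘ ⇑e.symm) : Fin n → ℝ) ∘ ⇑e = w := by funext p; simp
    calc w ⬝ᵥ ((L *ᵥ (w ∘ ⇑e.symm)) ∘ ⇑e)
        = ((w ∘ ⇑e.symm) ∘ ⇑e) ⬝ᵥ ((L *ᵥ (w ∘ ⇑e.symm)) ∘ ⇑e) := by rw [hw]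
      _ = _ := hdot_equiv _ _
  -- L_DD is positive definite
  have hDDherm : LDD.IsHermitian := by
    ext i j
    simp only [Matrix.conjTranspose_apply, LDD, star_trivial]
    exact hLsym j.1 i.1
  have hDDpos : LDD.PosDef := by
    refine Matrix.posDef_iff_dotProduct_mulVec.mpr ⟨hDDherm, fun x hx => ?_⟩
    set w : ({i // i ∈ Dᶜ} ⊕ {i // i ∈ D}) → ℝ := Sum.elim 0 x with hwdef
    set v : Fin n → ℝ := w ∘ e.symm with hvdef
    have hform : x ⬝ᵥ LDD *ᵥ x = v ⬝ᵥ L *ᵥ v := by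
      rw [← hform_transfer w]
      rw [Matrix.fromBlocks_mulVec]
      rw [sumElim_dotProduct_sumElim]
      simp [w]
    have hvD : ∀ d : {i // i ∈ D}, v d.1 = x d := by
      intro d
      simp only [v, w, Function.comp_apply, he]
      rw [show (finsetComplEquiv D).symm d.1 = Sum.inr d by
        simp [finsetComplEquiv, Equiv.coe_fn_symm_mk, d.2]]
      simp
    have hne : x ⬝ᵥ LDD *ᵥ x ≠ 0 := by
      intro h0
      have hvconst := hconst v (by rw [← hform, h0]) 
      obtain ⟨c, hc⟩ : Dᶜ.Nonempty := Finset.card_pos.mp (by omega)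
      have hvc : v c = 0 := by
        simp only [v, w, Function.comp_apply, he]
        rw [show (finsetComplEquiv D).symm c = Sum.inl ⟨c, hc⟩ by
          simp [finsetComplEquiv, Equiv.coe_fn_symm_mk, Finset.mem_compl.mp hc]]
        simp
      apply hx
      funext d
      have := hvconst d.1 c
      rw [hvD d, hvc] at this
      exact this
    have hnonneg' : 0 ≤ x ⬝ᵥ LDD *ᵥ x := by rw [hform]; exact hform_nonneg v
    have : 0 < x ⬝ᵥ LDD *ᵥ x := lt_of_le_of_ne hnonneg' (Ne.symm hne)
    simpa [star_trivial] using this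
  have hUnit : IsUnit LDD := by
    rw [Matrix.isUnit_iff_isUnit_det]
    exact (hDDpos.det_pos).ne'.isUnit
  haveI hInv : Invertible LDD := hUnit.nonempty_invertible.some
  -- L_DC is the conjugate transpose of L_CD
  have hBH : LCDᴴ = LDC := by
    ext i j
    simp only [Matrix.conjTranspose_apply, LCD, LDC, star_trivial]
    exact hLsym j.1 i.1
  -- full L is positive semidefinite
  have hLherm : L.IsHermitian := by
    ext i j
    simp only [Matrix.conjTranspose_apply, star_trivial]
    exact hLsym j i
  have hLpsd : L.PosSemidef := by
    refine Matrix.posSemidef_iff_dotProduct_mulVec.mpr ⟨hLherm, fun x => ?_⟩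
    simpa [star_trivial] using hform_nonneg x
  have hFBpsd : (Matrix.fromBlocks LCC LCD LDC LDD).PosSemidef := by
    rw [hblock]
    exact (Matrix.posSemidef_submatrix_equiv e).mpr hLpsd
  -- positive semidefiniteness of the Schur complement
  have hMpsd : M.PosSemidef := by
    have := (Matrix.PosDef.fromBlocks₂₂ LCC LCD hDDpos).mp (by rwa [hBH])
    simpa only [hBH] using this
  -- symmetry of M
  have hMsymm : M.IsSymm := by
    ext i j
    have := congrFun (congrFun hMpsd.1 i) j
    simpa [Matrix.conjTranspose_apply, star_trivial] using this
  -- nonnegativity of the entries of LDD⁻¹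
  have hdet : IsUnit LDD.det := (Matrix.isUnit_iff_isUnit_det _).mp hUnit
  have hLDDoff : ∀ k j : {i // i ∈ D}, k ≠ j → LDD k j ≤ 0 := by
    intro k j hkj
    exact hLoff_nonpos _ _ (fun h => hkj (Subtype.ext h))
  have hinv_nonneg : ∀ k l, 0 ≤ LDD⁻¹ k l := by
    intro k l0
    set x : {i // i ∈ D} → ℝ := LDD⁻¹ *ᵥ Pi.single l0 1 with hxd
    set xp : {i // i ∈ D} → ℝ := fun k => max (x k) 0 with hxp
    set xm : {i // i ∈ D} → ℝ := fun k => max (-x k) 0 with hxm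
    have hxp0 : ∀ k, 0 ≤ xp k := fun k => le_max_right _ _
    have hxm0 : ∀ k, 0 ≤ xm k := fun k => le_max_right _ _
    have hsplit : ∀ k, xp k - xm k = x k := by
      intro k
      rcases le_total 0 (x k) with h | h
      · rw [hxp, hxm]; simp only
        rw [max_eq_left h, max_eq_right (by linarith)]; ring
      · rw [hxp, hxm]; simp only
        rw [max_eq_right h, max_eq_left (by linarith)]; ring
    have hprod : ∀ k, xm k * xp k = 0 := by
      intro k
      rcases le_total 0 (x k) with h | h
      · rw [hxm]; simp only
        rw [max_eq_right (by linarith)]; ring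
      · rw [hxp]; simp only
        rw [max_eq_right h]; ring
    have hLx : LDD *ᵥ x = Pi.single l0 1 := by
      rw [hxd, Matrix.mulVec_mulVec, Matrix.mul_nonsing_inv _ hdet, Matrix.one_mulVec]
    have hs0 : 0 ≤ xm ⬝ᵥ LDD *ᵥ x := by
      rw [hLx]
      rw [dotProduct_single]
      simpa using hxm0 l0
    have hcross : xm ⬝ᵥ LDD *ᵥ xp ≤ 0 := by
      simp only [dotProduct, Matrix.mulVec]
      refine Finset.sum_nonpos fun k _ => ?_
      rw [Finset.mul_sum]
      refine Finset.sum_nonpos fun j _ => ?_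
      by_cases hkj : k = j
      · subst hkj
        rw [show xm k * (LDD k k * xp k) = (xm k * xp k) * LDD k k by ring, hprod k]
        simp
      · have h1 : LDD k j ≤ 0 := hLDDoff k j hkj
        have := mul_nonneg (hxm0 k) (hxp0 j)
        nlinarith
    have hxmx : x = fun k => xp k - xm k := by funext k; rw [hsplit k]
    have hquadm : xm ⬝ᵥ LDD *ᵥ xm ≤ 0 := by
      have : xm ⬝ᵥ LDD *ᵥ x = xm ⬝ᵥ LDD *ᵥ xp - xm ⬝ᵥ LDD *ᵥ xm := by
        conv_lhs => rw [hxmx]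
        rw [show (fun k => xp k - xm k) = xp - xm from rfl, Matrix.mulVec_sub,
          dotProduct_sub]
      linarith
    have hxmzero : xm = 0 := by
      by_contra hne
      have := (Matrix.posDef_iff_dotProduct_mulVec.mp hDDpos).2 hne
      rw [star_trivial] at this
      linarith
    have : 0 ≤ x k := by
      have h1 := hsplit k
      have h2 : xm k = 0 := congrFun hxmzero k
      have := hxp0 k
      linarith
    have hx : x k = LDD⁻¹ k l0 := by
      rw [hxd]
      simp [Matrix.mulVec_single]
    linarith
  -- off-diagonal entries of M are nonpositive
  have hMoff : ∀ i j, i ≠ j → M i j ≤ 0 := by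
    intro i j hij
    have hij' : i.1 ≠ j.1 := fun h => hij (Subtype.ext h)
    have h1 : LCC i j ≤ 0 := hLoff_nonpos _ _ hij'
    have h2 : 0 ≤ (LCD * LDD⁻¹ * LDC) i j := by
      simp only [Matrix.mul_apply]
      refine Finset.sum_nonneg fun l _ => ?_
      have hA : (∑ k, LCD i k * LDD⁻¹ k l) ≤ 0 := by
        refine Finset.sum_nonpos fun k _ => ?_
        have h3 : LCD i k ≤ 0 :=
          hLoff_nonpos _ _ (fun h => (Finset.mem_compl.mp i.2) (h ▸ k.2))
        have h4 := hinv_nonneg k l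
        exact mul_nonpos_iff.mpr (Or.inr ⟨h3, h4⟩)
      have hB : LDC l j ≤ 0 :=
        hLoff_nonpos _ _ (fun h => (Finset.mem_compl.mp j.2) (h.symm ▸ l.2))
      exact mul_nonneg_iff.mpr (Or.inr ⟨hA, hB⟩)
    have hM : M i j = LCC i j - (LCD * LDD⁻¹ * LDC) i j := rfl
    rw [hM]
    exact sub_nonpos.mpr (h1.trans h2)
  -- row sums of M are zero
  have hsplitrow : ∀ k : Fin n,
      ∑ j : {i // i ∈ Dᶜ}, L k j.1 = - ∑ d : {i // i ∈ D}, L k d.1 := by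
    intro k
    have h1 : ∑ j ∈ Dᶜ, L k j + ∑ j ∈ D, L k j = ∑ j, L k j :=
      Finset.sum_compl_add_sum D fun j => L k j
    rw [hrow k] at h1
    rw [Finset.sum_coe_sort Dᶜ (fun j => L k j), Finset.sum_coe_sort D (fun j => L k j)]
    linarith
  have hMrow : ∀ i, ∑ j, M i j = 0 := by
    intro i
    have hcancel : LCD * LDD⁻¹ * LDD = LCD := by
      rw [Matrix.mul_assoc, Matrix.nonsing_inv_mul _ hdet, Matrix.mul_one]
    have hT : ∑ j, (LCD * LDD⁻¹ * LDC) i j = - ∑ d, LCD i d :=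
      calc ∑ j, (LCD * LDD⁻¹ * LDC) i j
          = ∑ j, ∑ l, (LCD * LDD⁻¹) i l * LDC l j :=
            Finset.sum_congr rfl fun j _ => by rw [Matrix.mul_apply]
        _ = ∑ l, (LCD * LDD⁻¹) i l * (∑ j, LDC l j) := by
            rw [Finset.sum_comm]
            exact Finset.sum_congr rfl fun l _ => by rw [Finset.mul_sum]
        _ = ∑ l, (LCD * LDD⁻¹) i l * (- ∑ d, LDD l d) := by
            refine Finset.sum_congr rfl fun l _ => ?_
            congr 1
            exact hsplitrow l.1
        _ = ∑ l, - ∑ d, (LCD * LDD⁻¹) i l * LDD l d := by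
            refine Finset.sum_congr rfl fun l _ => ?_
            rw [mul_neg, Finset.mul_sum]
        _ = - ∑ l, ∑ d, (LCD * LDD⁻¹) i l * LDD l d := by
            rw [Finset.sum_neg_distrib]
        _ = - ∑ d, ∑ l, (LCD * LDD⁻¹) i l * LDD l d := by
            rw [Finset.sum_comm]
        _ = - ∑ d, (LCD * LDD⁻¹ * LDD) i d := by
            rw [neg_inj]
            exact Finset.sum_congr rfl fun d _ => by rw [Matrix.mul_apply]
        _ = - ∑ d, LCD i d := by rw [hcancel]
    have hMij : ∀ j, M i j = LCC i j - (LCD * LDD⁻¹ * LDC) i j := fun j => rfl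
    calc ∑ j, M i j = ∑ j, LCC i j - ∑ j, (LCD * LDD⁻¹ * LDC) i j := by
          rw [← Finset.sum_sub_distrib]
          exact Finset.sum_congr rfl fun j _ => hMij j
      _ = ∑ j, LCC i j + ∑ d, LCD i d := by rw [hT]; ring
      _ = 0 := by
          have := hsplitrow i.1
          simp only [LCC, LCD] at *
          linarith
  have hMcol : ∀ j, ∑ i, M i j = 0 := by
    intro j
    calc ∑ i, M i j = ∑ i, M j i := by
          refine Finset.sum_congr rfl fun i _ => ?_
          have := congrFun (congrFun hMsymm i) j
          simpa [Matrix.transpose_apply] using this.symm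
      _ = 0 := hMrow j
  -- strict positivity of the diagonal of M
  have hMdiag : ∀ i, 0 < M i i := by
    intro i
    have hsingle : ∀ (N : Matrix {i // i ∈ Dᶜ} {i // i ∈ Dᶜ} ℝ) (i : {i // i ∈ Dᶜ}),
        (Pi.single i 1 : {i // i ∈ Dᶜ} → ℝ) ⬝ᵥ N *ᵥ (Pi.single i 1) = N i i := by
      intro N i
      simp [dotProduct, Matrix.mulVec, Pi.single_apply, Finset.sum_ite_eq,
        mul_ite, ite_mul, mul_zero, zero_mul]
    have hge : 0 ≤ M i i := by
      have := (Matrix.posSemidef_iff_dotProduct_mulVec.mp hMpsd).2 (Pi.single i 1)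
      rw [star_trivial, hsingle M i] at this
      exact this
    rcases hge.lt_or_eq with h | h
    · exact h
    exfalso
    set x : {i // i ∈ Dᶜ} → ℝ := Pi.single i 1 with hxdef
    set y : {i // i ∈ D} → ℝ := -((LDD⁻¹ * LCDᴴ) *ᵥ x) with hydef
    have hzero : (LDD⁻¹ * LCDᴴ) *ᵥ x + y = 0 := by rw [hydef]; ring
    have hschur := Matrix.schur_complement_eq₂₂ LCC LCD x y hDDherm
    rw [hzero] at hschur
    simp only [star_zero, Matrix.zero_vecMul, zero_dotProduct, zero_add] at hschur
    rw [hBH] at hschur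
    have hstar : star (Sum.elim x y) = Sum.elim x y := by
      funext p; exact star_trivial _
    have hstarx : star x = x := by funext p; exact star_trivial _
    rw [hstar, hstarx] at hschur
    rw [← Matrix.dotProduct_mulVec, ← Matrix.dotProduct_mulVec] at hschur
    have hMval : x ⬝ᵥ (LCC - LCD * LDD⁻¹ * LDC) *ᵥ x = M i i := hsingle M i
    rw [hMval, ← h] at hschur
    -- hschur : Sum.elim x y ⬝ᵥ fromBlocks LCC LCD LDC LDD *ᵥ Sum.elim x y = 0
    have hvconst := hconst ((Sum.elim x y) ∘ ⇑e.symm)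
      (by rw [← hform_transfer (Sum.elim x y)]; exact hschur)
    obtain ⟨b, hb, hbne⟩ := Finset.exists_mem_ne (by omega : 1 < Dᶜ.card) i.1
    have hvi : ((Sum.elim x y) ∘ ⇑e.symm) i.1 = 1 := by
      simp only [Function.comp_apply, he]
      rw [show (finsetComplEquiv D).symm i.1 = Sum.inl ⟨i.1, i.2⟩ by
        simp [finsetComplEquiv, Equiv.coe_fn_symm_mk, Finset.mem_compl.mp i.2]]
      simp [hxdef]
    have hvb : ((Sum.elim x y) ∘ ⇑e.symm) b = 0 := by
      simp only [Function.comp_apply, he]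
      rw [show (finsetComplEquiv D).symm b = Sum.inl ⟨b, hb⟩ by
        simp [finsetComplEquiv, Equiv.coe_fn_symm_mk, Finset.mem_compl.mp hb]]
      simp only [Sum.elim_inl, hxdef]
      rw [Pi.single_apply]
      rw [if_neg (fun hEq => hbne (congrArg Subtype.val hEq))]
    have := hvconst i.1 b
    rw [hvi, hvb] at this
    exact one_ne_zero this
  exact ⟨hUnit, hMsymm, hMpsd, hMdiag, hMoff, hMrow, hMcol⟩
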